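/- Let n ≥ 2 be an integer and 0 < μ < 1/n. Then the atomless measure F* on [0,1] with cumulative distribution function F*(x) = (x/(nμ))^{1/(n-1)} for x ∈ [0, nμ] (and F*(x) = 1 for x ≥ nμ) is the unique symmetric equilibrium of the frictionless game: u_n(G,F*) ≤ 1/n for every G ∈ M(μ), and any F ∈ M(μ) with u_n(G,F) ≤ 1/n for every G ∈ M(μ) equals F*. -/

import Mathlib

open MeasureTheory

/-- The fair-tie winning probability of one draw from `G` against `n-1` i.i.d. draws from
`F`, with exact ties broken uniformly at random. -/
noncomputable def winProb (n : ℕ) (G F : Measure ℝ) : ℝ :=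
  ∫ x, (∑ i ∈ Finset.range n,
      ((n - 1).choose i : ℝ) * ((F {x}).toReal) ^ i * ((F (Set.Ico 0 x)).toReal) ^ (n - 1 - i)
        / ((i : ℝ) + 1)) ∂G

/-- `F ∈ M(μ)`: a Borel probability measure on `[0,1]` with mean `μ`. -/
def MemM (μ : ℝ) (F : Measure ℝ) : Prop :=
  IsProbabilityMeasure F ∧ F (Set.Icc (0:ℝ) 1)ᶜ = 0 ∧ (∫ x, x ∂F) = μ

namespace Stmt12Aux

open Set intervalIntegral

/-- The win-probability integrand. -/
noncomputable def wfun (n : ℕ) (F : Measure ℝ) (x : ℝ) : ℝ :=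
  ∑ i ∈ Finset.range n,
      ((n - 1).choose i : ℝ) * ((F {x}).toReal) ^ i * ((F (Set.Ico 0 x)).toReal) ^ (n - 1 - i)
        / ((i : ℝ) + 1)

lemma winProb_eq (n : ℕ) (G F : Measure ℝ) : winProb n G F = ∫ x, wfun n F x ∂G := rfl

lemma wfun_nonneg (n : ℕ) (F : Measure ℝ) (x : ℝ) : 0 ≤ wfun n F x :=
  Finset.sum_nonneg fun i _ => by positivity

lemma toReal_le_one (F : Measure ℝ) [IsProbabilityMeasure F] (s : Set ℝ) : (F s).toReal ≤ 1 := by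
  rw [← ENNReal.toReal_one]
  exact ENNReal.toReal_mono ENNReal.one_ne_top (by simpa using prob_le_one)

lemma wfun_le_pow (n : ℕ) (hn : 1 ≤ n) (F : Measure ℝ) (x : ℝ) :
    wfun n F x ≤ ((F {x}).toReal + (F (Set.Ico 0 x)).toReal) ^ (n - 1) := by
  have h1 : wfun n F x ≤ ∑ i ∈ Finset.range n,
      ((n - 1).choose i : ℝ) * ((F {x}).toReal) ^ i * ((F (Set.Ico 0 x)).toReal) ^ (n - 1 - i) := by
    refine Finset.sum_le_sum fun i _ => ?_
    have : (0:ℝ) ≤ ((n - 1).choose i : ℝ) * ((F {x}).toReal) ^ i *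
        ((F (Set.Ico 0 x)).toReal) ^ (n - 1 - i) := by positivity
    exact div_le_self this (by simpa using Nat.cast_nonneg (α := ℝ) i)
  refine h1.trans (le_of_eq ?_)
  rw [add_pow]
  rw [show n - 1 + 1 = n by omega]
  exact Finset.sum_congr rfl fun i hi => by ring

lemma pow_div_le_wfun (n : ℕ) (hn : 1 ≤ n) (F : Measure ℝ) (x : ℝ) :
    ((F {x}).toReal + (F (Set.Ico 0 x)).toReal) ^ (n - 1) / n ≤ wfun n F x := by
  have h1 : (∑ i ∈ Finset.range n,
      ((n - 1).choose i : ℝ) * ((F {x}).toReal) ^ i * ((F (Set.Ico 0 x)).toReal) ^ (n - 1 - i)) / n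
      ≤ wfun n F x := by
    rw [Finset.sum_div]
    refine Finset.sum_le_sum fun i hi => ?_
    have hin : (i:ℝ) + 1 ≤ (n:ℝ) := by
      have : i + 1 ≤ n := Finset.mem_range.mp hi
      exact_mod_cast this
    have hnum : (0:ℝ) ≤ ((n - 1).choose i : ℝ) * ((F {x}).toReal) ^ i *
        ((F (Set.Ico 0 x)).toReal) ^ (n - 1 - i) := by positivity
    gcongr
  refine le_trans (le_of_eq ?_) h1
  congr 1
  rw [add_pow, show n - 1 + 1 = n by omega]
  exact Finset.sum_congr rfl fun i hi => by ring

lemma pow_le_wfun (n : ℕ) (hn : 1 ≤ n) (F : Measure ℝ) (x : ℝ) :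
    ((F (Set.Ico 0 x)).toReal) ^ (n - 1) ≤ wfun n F x := by
  have h0 : (0:ℕ) ∈ Finset.range n := Finset.mem_range.mpr (by omega)
  have := Finset.single_le_sum (f := fun i => ((n - 1).choose i : ℝ) * ((F {x}).toReal) ^ i *
      ((F (Set.Ico 0 x)).toReal) ^ (n - 1 - i) / ((i : ℝ) + 1)) (fun i _ => by positivity) h0
  simpa [wfun] using this

section CdfFacts

variable {F : Measure ℝ} [IsFiniteMeasure F]

omit [IsFiniteMeasure F] in
lemma meas_Iio_zero (hs : F (Set.Icc (0:ℝ) 1)ᶜ = 0) : F (Iio (0:ℝ)) = 0 :=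
  measure_mono_null (fun y hy => by
    simp only [mem_compl_iff, mem_Icc]; intro h; linarith [h.1, mem_Iio.mp hy]) hs

omit [IsFiniteMeasure F] in
lemma meas_Ico_eq_Iio (hs : F (Set.Icc (0:ℝ) 1)ᶜ = 0) (x : ℝ) : F (Ico 0 x) = F (Iio x) := by
  refine le_antisymm (measure_mono fun y hy => hy.2) ?_
  calc F (Iio x) ≤ F (Ico 0 x ∪ Iio 0) := measure_mono (fun y hy => by
        rcases le_or_gt 0 y with h | h
        · exact Or.inl ⟨h, hy⟩
        · exact Or.inr h)
    _ ≤ F (Ico 0 x) + F (Iio 0) := measure_union_le _ _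
    _ = F (Ico 0 x) := by rw [meas_Iio_zero hs, add_zero]

omit [IsFiniteMeasure F] in
lemma singleton_add_Ico (x : ℝ) : F {x} + F (Ico 0 x) = F ({x} ∪ Ico 0 x) := by
  rw [measure_union _ measurableSet_Ico]
  simp only [disjoint_left, mem_singleton_iff, mem_Ico]
  rintro a rfl h
  exact absurd h.2 (lt_irrefl _)

lemma pc_le_D (x : ℝ) :
    (F {x}).toReal + (F (Ico 0 x)).toReal ≤ (F (Iic x)).toReal := by
  rw [← ENNReal.toReal_add (measure_ne_top _ _) (measure_ne_top _ _)]
  refine ENNReal.toReal_mono (measure_ne_top _ _) ?_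
  rw [singleton_add_Ico]
  refine measure_mono fun y hy => ?_
  rcases hy with h | h
  · exact le_of_eq h
  · exact le_of_lt h.2

lemma meas_Iic_eq_one [IsProbabilityMeasure F] (hs : F (Set.Icc (0:ℝ) 1)ᶜ = 0) {x : ℝ}
    (hx : 1 ≤ x) : F (Iic x) = 1 := by
  have h1 : F (Iic x) + F (Ioi x) = 1 := by
    rw [← measure_union (Iic_disjoint_Ioi le_rfl) measurableSet_Ioi, Iic_union_Ioi,
      measure_univ]
  have h2 : F (Ioi x) = 0 :=
    measure_mono_null (fun y hy => by
      simp only [mem_compl_iff, mem_Icc]; intro h; linarith [mem_Ioi.mp hy, h.2]) hs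
  rw [h2, add_zero] at h1; exact h1

lemma pc_one [IsProbabilityMeasure F] (hs : F (Set.Icc (0:ℝ) 1)ᶜ = 0) :
    (F {(1:ℝ)}).toReal + (F (Ico 0 1)).toReal = 1 := by
  rw [← ENNReal.toReal_add (measure_ne_top _ _) (measure_ne_top _ _), singleton_add_Ico]
  have hst : ({(1:ℝ)} ∪ Ico 0 1) = Icc (0:ℝ) 1 := by
    ext y; simp only [mem_union, mem_singleton_iff, mem_Ico, mem_Icc]
    constructor
    · rintro (rfl | h)
      · exact ⟨zero_le_one, le_refl _⟩
      · exact ⟨h.1, h.2.le⟩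
    · rintro ⟨h0, h1⟩
      rcases eq_or_lt_of_le h1 with rfl | h
      · exact Or.inl rfl
      · exact Or.inr ⟨h0, h⟩
  rw [hst]
  have h1 : F (Icc (0:ℝ) 1) = 1 := by
    have := measure_add_measure_compl (μ := F) (s := Icc (0:ℝ) 1) measurableSet_Icc
    rw [hs, add_zero, measure_univ] at this; exact this
  rw [h1, ENNReal.toReal_one]

lemma measurable_DIic : Measurable fun x => (F (Iic x)).toReal :=
  Monotone.measurable fun _ _ hab =>
    ENNReal.toReal_mono (measure_ne_top _ _) (measure_mono (Iic_subset_Iic.mpr hab))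

lemma measurable_CIio : Measurable fun x => (F (Iio x)).toReal :=
  Monotone.measurable fun _ _ hab =>
    ENNReal.toReal_mono (measure_ne_top _ _) (measure_mono (Iio_subset_Iio hab))

lemma Iic_eq_Iio_add (x : ℝ) : (F (Iic x)).toReal = (F (Iio x)).toReal + (F {x}).toReal := by
  rw [← ENNReal.toReal_add (measure_ne_top _ _) (measure_ne_top _ _)]
  congr 1
  have hset : Iio x ∪ {x} = Iic x := by
    ext y
    simp only [mem_union, mem_Iio, mem_singleton_iff, mem_Iic]
    constructor
    · rintro (h | rfl)
      · exact h.le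
      · exact le_refl _
    · intro h
      rcases lt_or_eq_of_le h with h | h
      · exact Or.inl h
      · exact Or.inr h
  rw [← measure_union (by simp) (measurableSet_singleton x), hset]

lemma measurable_p : Measurable fun x : ℝ => (F {x}).toReal := by
  have h : (fun x : ℝ => (F {x}).toReal) =
      fun x => (F (Iic x)).toReal - (F (Iio x)).toReal := by
    funext x; rw [Iic_eq_Iio_add]; ring
  rw [h]
  exact measurable_DIic.sub measurable_CIio

lemma measurable_cIco (hs : F (Set.Icc (0:ℝ) 1)ᶜ = 0) :
    Measurable fun x : ℝ => (F (Ico 0 x)).toReal := by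
  have h : (fun x : ℝ => (F (Ico 0 x)).toReal) = fun x => (F (Iio x)).toReal := by
    funext x; rw [meas_Ico_eq_Iio hs]
  rw [h]; exact measurable_CIio

lemma wfun_le_one [IsProbabilityMeasure F] {n : ℕ} (hn : 1 ≤ n) (x : ℝ) : wfun n F x ≤ 1 := by
  refine (wfun_le_pow n hn F x).trans (pow_le_one₀ (by positivity) ?_)
  exact (pc_le_D x).trans (toReal_le_one F _)

lemma wfun_one_ge [IsProbabilityMeasure F] (hs : F (Set.Icc (0:ℝ) 1)ᶜ = 0) {n : ℕ}
    (hn : 1 ≤ n) : 1/(n:ℝ) ≤ wfun n F 1 := by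
  have h := pow_div_le_wfun n hn F 1
  rw [pc_one hs] at h
  simpa using h

lemma measurable_wfun (hs : F (Set.Icc (0:ℝ) 1)ᶜ = 0) (n : ℕ) : Measurable (wfun n F) := by
  refine Finset.measurable_sum _ fun i _ => ?_
  exact ((measurable_const.mul (measurable_p.pow_const i)).mul
    ((measurable_cIco hs).pow_const _)).div_const _

lemma integrable_of_bounded {G : Measure ℝ} [IsFiniteMeasure G] {f : ℝ → ℝ}
    (hm : Measurable f) (h0 : ∀ x, 0 ≤ f x) (h1 : ∀ x, f x ≤ 1) : Integrable f G := by
  refine Integrable.mono' (integrable_const 1) hm.aestronglyMeasurable ?_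
  refine Filter.Eventually.of_forall fun x => ?_
  rw [Real.norm_eq_abs, abs_of_nonneg (h0 x)]
  exact h1 x

lemma integrable_wfun [IsProbabilityMeasure F] (hs : F (Set.Icc (0:ℝ) 1)ᶜ = 0) {n : ℕ}
    (hn : 1 ≤ n) (G : Measure ℝ) [IsFiniteMeasure G] : Integrable (wfun n F) G :=
  integrable_of_bounded (measurable_wfun hs n) (wfun_nonneg n F) (fun x => wfun_le_one hn x)

end CdfFacts

section TwoPoint

/-- Two-point measure. -/
noncomputable def tp (θ a b : ℝ) : Measure ℝ :=
  (ENNReal.ofReal θ) • Measure.dirac a + (ENNReal.ofReal (1 - θ)) • Measure.dirac b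

lemma integral_tp (f : ℝ → ℝ) {θ : ℝ} (a b : ℝ) (h0 : 0 ≤ θ) (h1 : θ ≤ 1) :
    ∫ x, f x ∂(tp θ a b) = θ * f a + (1 - θ) * f b := by
  unfold tp
  rw [integral_add_measure
      (((integrable_const _).congr (ae_eq_dirac f).symm).smul_measure ENNReal.ofReal_ne_top)
      (((integrable_const _).congr (ae_eq_dirac f).symm).smul_measure ENNReal.ofReal_ne_top)]
  rw [MeasureTheory.integral_smul_measure, MeasureTheory.integral_smul_measure, integral_dirac, integral_dirac,
    ENNReal.toReal_ofReal h0, ENNReal.toReal_ofReal (by linarith)]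
  simp [smul_eq_mul]

lemma tp_prob {θ : ℝ} (a b : ℝ) (h0 : 0 ≤ θ) (h1 : θ ≤ 1) : IsProbabilityMeasure (tp θ a b) := by
  constructor
  unfold tp
  rw [Measure.add_apply, Measure.smul_apply, Measure.smul_apply]
  simp only [measure_univ, smul_eq_mul, mul_one]
  rw [← ENNReal.ofReal_add h0 (by linarith)]
  norm_num

lemma tp_memM {μ θ a b : ℝ} (h0 : 0 ≤ θ) (h1 : θ ≤ 1) (ha : a ∈ Icc (0:ℝ) 1)
    (hb : b ∈ Icc (0:ℝ) 1) (hmean : θ * a + (1 - θ) * b = μ) :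
    MemM μ (tp θ a b) := by
  refine ⟨tp_prob a b h0 h1, ?_, ?_⟩
  · unfold tp
    rw [Measure.add_apply, Measure.smul_apply, Measure.smul_apply]
    rw [Measure.dirac_apply' _ (measurableSet_Icc.compl),
      Measure.dirac_apply' _ (measurableSet_Icc.compl)]
    rw [indicator_of_notMem (by simpa using ha), indicator_of_notMem (by simpa using hb)]
    simp
  · rw [integral_tp _ a b h0 h1]
    exact hmean

end TwoPoint

section Mean

lemma integrable_id_of_mean {G : Measure ℝ} {μ : ℝ} (hμ : μ ≠ 0) (hmean : (∫ x, x ∂G) = μ) :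
    Integrable (fun x : ℝ => x) G := by
  by_contra h
  rw [integral_undef h] at hmean
  exact hμ hmean.symm

lemma mean_layer {F : Measure ℝ} [IsProbabilityMeasure F] (hs : F (Set.Icc (0:ℝ) 1)ᶜ = 0)
    {μ : ℝ} (hμ : μ ≠ 0) (hmean : (∫ x, x ∂F) = μ) :
    ∫ t in Ioc (0:ℝ) 1, (F (Ici t)).toReal = μ := by
  have hae : ∀ᵐ x ∂F, x ∈ Icc (0:ℝ) 1 := by
    rw [ae_iff]
    exact hs
  have hint : Integrable (fun x : ℝ => x) F := integrable_id_of_mean hμ hmean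
  have h := hint.integral_eq_integral_Ioc_meas_le (M := 1)
    (by filter_upwards [hae] with x hx using hx.1)
    (by filter_upwards [hae] with x hx using hx.2)
  rw [hmean] at h
  rw [h]
  rfl

lemma Iio_add_Ici {F : Measure ℝ} [IsProbabilityMeasure F] (t : ℝ) :
    (F (Iio t)).toReal + (F (Ici t)).toReal = 1 := by
  rw [← ENNReal.toReal_add (measure_ne_top _ _) (measure_ne_top _ _)]
  rw [← measure_union (Iio_disjoint_Ici le_rfl) measurableSet_Ici, Iio_union_Ici, measure_univ,
    ENNReal.toReal_one]

end Mean

section Calc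

lemma tangent {r u v : ℝ} (hr0 : 0 < r) (hr1 : r ≤ 1) (hu : 0 ≤ u) (hv : 0 < v) :
    u ^ r ≤ v ^ r + r * v ^ (r - 1) * (u - v) := by
  have Y := Real.geom_mean_le_arith_mean2_weighted hr0.le (by linarith : (0:ℝ) ≤ 1 - r)
      hu hv.le (by ring)
  have hm := mul_le_mul_of_nonneg_right Y (le_of_lt (Real.rpow_pos_of_pos hv (r-1)))
  have e1 : u ^ r * v ^ (1 - r) * v ^ (r - 1) = u ^ r := by
    rw [mul_assoc, ← Real.rpow_add hv]
    norm_num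
  have e2 : (r * u + (1 - r) * v) * v ^ (r - 1) =
      r * v ^ (r-1) * u + (1 - r) * (v * v ^ (r - 1)) := by ring
  have e3 : v * v ^ (r - 1) = v ^ r := by
    nth_rewrite 1 [← Real.rpow_one v]
    rw [← Real.rpow_add hv]
    norm_num
  rw [e1, e2, e3] at hm
  nlinarith [hm]

lemma psi_cont {r : ℝ} (hr0 : 0 < r) (g : ℝ → ℝ) (hg : Continuous g) :
    Continuous (fun x => min 1 ((max 0 (g x)) ^ r)) := by
  refine Continuous.min continuous_const ?_
  rw [continuous_iff_continuousAt]
  intro t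
  exact (Real.continuousAt_rpow_const _ _ (Or.inr hr0.le)).comp
    ((continuous_const.max hg).continuousAt)

lemma rpow_cont {r : ℝ} (hr0 : 0 < r) (g : ℝ → ℝ) (hg : Continuous g) :
    Continuous (fun x => (g x) ^ r) := by
  rw [continuous_iff_continuousAt]
  intro t
  exact (Real.continuousAt_rpow_const _ _ (Or.inr hr0.le)).comp hg.continuousAt

lemma calcA {r c : ℝ} (hr0 : 0 < r) (hc0 : 0 < c) :
    ∫ x in (0:ℝ)..c, (x/c) ^ r = c / (r + 1) := by
  have heq : EqOn (fun x : ℝ => (x/c) ^ r) (fun x : ℝ => (1/c^r) * x ^ r) (uIcc 0 c) := by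
    intro x hx
    have hx0 : 0 ≤ x := ((uIcc_of_le hc0.le ▸ hx : x ∈ Icc 0 c)).1
    simp only
    rw [Real.div_rpow hx0 hc0.le]
    ring
  rw [intervalIntegral.integral_congr heq, intervalIntegral.integral_const_mul,
    integral_rpow (Or.inl (by linarith))]
  rw [Real.zero_rpow (by linarith : r + 1 ≠ 0)]
  have hcr : (0:ℝ) < c ^ r := Real.rpow_pos_of_pos hc0 r
  have hca : c ^ (r+1) = c ^ r * c := by
    rw [Real.rpow_add hc0, Real.rpow_one]
  rw [hca]
  field_simp
  ring

lemma calcW_integrand_eq {r c μ0 : ℝ} (hr0 : 0 < r) (hr1 : r ≤ 1) (hc0 : 0 < c) :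
    EqOn (fun x : ℝ => (μ0 - x) * (r * (x/c) ^ (r-1)))
      (fun x : ℝ => (μ0 * (r * c ^ (1-r))) * x ^ (r-1) - (r * c ^ (1-r)) * x ^ r)
      (uIcc 0 c) := by
  intro x hx
  have hx0 : 0 ≤ x := ((uIcc_of_le hc0.le ▸ hx : x ∈ Icc 0 c)).1
  simp only
  have hdiv : (x/c) ^ (r-1) = x ^ (r-1) * c ^ (1-r) := by
    rw [Real.div_rpow hx0 hc0.le, div_eq_mul_inv, ← Real.rpow_neg hc0.le]
    norm_num
  rw [hdiv]
  rcases eq_or_lt_of_le hx0 with rfl | hx0'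
  · rcases eq_or_lt_of_le hr1 with rfl | hr1'
    · norm_num
    · rw [Real.zero_rpow (by linarith : r - 1 ≠ 0), Real.zero_rpow (by linarith : r ≠ 0)]
      ring
  · have hxr : x ^ r = x ^ (r-1) * x := by
      nth_rewrite 1 [show r = (r-1) + 1 by ring]
      rw [Real.rpow_add hx0', Real.rpow_one]
    rw [hxr]
    ring

lemma calcW_integrable {r c μ0 : ℝ} (hr0 : 0 < r) (hr1 : r ≤ 1) (hc0 : 0 < c) :
    IntervalIntegrable (fun x : ℝ => (μ0 - x) * (r * (x/c) ^ (r-1))) volume 0 c := by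
  have h1 : IntervalIntegrable
      (fun x : ℝ => (μ0 * (r * c ^ (1-r))) * x ^ (r-1) - (r * c ^ (1-r)) * x ^ r) volume 0 c :=
    ((intervalIntegrable_rpow' (by linarith)).const_mul _).sub
      ((intervalIntegrable_rpow' (by linarith)).const_mul _)
  refine h1.congr ?_
  intro x hx
  exact ((calcW_integrand_eq hr0 hr1 hc0) (uIoc_subset_uIcc hx)).symm

lemma calcW {r c μ0 : ℝ} (hr0 : 0 < r) (hr1 : r ≤ 1) (hc0 : 0 < c) :
    ∫ x in (0:ℝ)..c, ((μ0 - x) * (r * (x/c) ^ (r-1))) = c * μ0 - r * (c*c) / (r+1) := by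
  rw [intervalIntegral.integral_congr (calcW_integrand_eq hr0 hr1 hc0)]
  rw [intervalIntegral.integral_sub ((intervalIntegrable_rpow' (by linarith)).const_mul _)
      ((intervalIntegrable_rpow' (by linarith)).const_mul _),
    intervalIntegral.integral_const_mul, intervalIntegral.integral_const_mul,
    integral_rpow (Or.inl (by linarith : (-1:ℝ) < r - 1)),
    integral_rpow (Or.inl (by linarith : (-1:ℝ) < r))]
  rw [show r - 1 + 1 = r by ring]
  rw [Real.zero_rpow (by linarith : r ≠ 0), Real.zero_rpow (by linarith : r + 1 ≠ 0)]
  have h1 : c ^ (1-r) * c ^ r = c := by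
    rw [← Real.rpow_add hc0]; norm_num
  have h2 : c ^ (1-r) * c ^ (r+1) = c * c := by
    rw [← Real.rpow_add hc0, show 1 - r + (r+1) = 2 by ring]
    rw [show (2:ℝ) = ((2:ℕ):ℝ) by norm_num, Real.rpow_natCast]
    ring
  field_simp
  linear_combination (μ0*(1+r)) * h1 - r * h2

lemma calc_eq {r c μ0 : ℝ} (hr0 : 0 < r) (hr1 : r ≤ 1) (hc0 : 0 < c) (hc1 : c < 1)
    (hμ : μ0 = c*r/(r+1)) :
    ∫ x in (0:ℝ)..1, min 1 ((max 0 (x/c)) ^ r) = 1 - μ0 := by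
  have hcont : Continuous (fun x : ℝ => min 1 ((max 0 (x/c)) ^ r)) :=
    psi_cont hr0 _ (continuous_id.div_const c)
  rw [← intervalIntegral.integral_add_adjacent_intervals (b := c)
      (hcont.intervalIntegrable _ _) (hcont.intervalIntegrable _ _)]
  have h1 : ∫ x in (0:ℝ)..c, min 1 ((max 0 (x/c)) ^ r) = ∫ x in (0:ℝ)..c, (x/c) ^ r := by
    refine intervalIntegral.integral_congr fun x hx => ?_
    rcases (uIcc_of_le hc0.le ▸ hx : x ∈ Icc 0 c) with ⟨hx0, hxc⟩
    have hd0 : 0 ≤ x/c := div_nonneg hx0 hc0.le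
    rw [max_eq_right hd0, min_eq_right (Real.rpow_le_one hd0 ((div_le_one hc0).mpr hxc) hr0.le)]
  have h2 : ∫ x in c..(1:ℝ), min 1 ((max 0 (x/c)) ^ r) = ∫ x in c..(1:ℝ), (1:ℝ) := by
    refine intervalIntegral.integral_congr fun x hx => ?_
    rcases (uIcc_of_le hc1.le ▸ hx : x ∈ Icc c 1) with ⟨hxc, _⟩
    have hd1 : (1:ℝ) ≤ x/c := (one_le_div hc0).mpr hxc
    rw [max_eq_right (by linarith), min_eq_left (Real.one_le_rpow hd1 hr0.le)]
  rw [h1, h2, calcA hr0 hc0, intervalIntegral.integral_const, smul_eq_mul, mul_one, hμ]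
  field_simp
  ring

set_option maxHeartbeats 1000000 in
lemma calc_strict {r c μ0 A β : ℝ} (hr0 : 0 < r) (hr1 : r ≤ 1) (hc0 : 0 < c) (hc1 : c < 1)
    (hβ0 : 0 ≤ β) (hβlt : β < 1/c) (hμ : μ0 = c*r/(r+1)) (hA : A = r/(r+1)) :
    ∫ x in (0:ℝ)..1, min 1 ((max 0 (A + β*(x - μ0))) ^ r) < 1 - μ0 := by
  have hr1p : (0:ℝ) < r + 1 := by linarith
  have hAc : A = μ0/c := by rw [hA, hμ]; field_simp
  have hμ0pos : 0 < μ0 := by rw [hμ]; positivity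
  have hμ0c : μ0 < c := by
    rw [hμ]; rw [div_lt_iff₀ hr1p]; nlinarith
  have hl0 : 0 < A - β*μ0 := by
    have h1 : β*μ0 < (1/c)*μ0 := mul_lt_mul_of_pos_right hβlt hμ0pos
    have h2 : (1/c)*μ0 = A := by rw [hAc]; ring
    linarith
  have hlnn : ∀ x : ℝ, 0 ≤ x → 0 ≤ A + β*(x - μ0) := fun x hx => by nlinarith
  have hlc : A + β*(c - μ0) < 1 := by
    have h1 : β*(c-μ0) < (1/c)*(c-μ0) := mul_lt_mul_of_pos_right hβlt (by linarith)
    have h2 : A + (1/c)*(c-μ0) = 1 := by rw [hAc]; field_simp; ring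
    linarith
  set ε0 := 1 - (A + β*(c - μ0)) with hε0def
  have hε0 : 0 < ε0 := by simp only [hε0def]; linarith
  have hε0le1 : ε0 ≤ 1 := by
    have := hlnn c hc0.le; simp only [hε0def]; linarith
  set e := min 1 (c + ε0/(2*(β+1))) with hedef
  have hce : c < e := by
    have h9 : 0 < ε0/(2*(β+1)) := by positivity
    exact lt_min hc1 (by linarith)
  have he1 : e ≤ 1 := min_le_left _ _
  have hbound : ∀ x ∈ Icc c e, A + β*(x - μ0) ≤ 1 - ε0/2 := by
    intro x hx
    have hxe : x ≤ c + ε0/(2*(β+1)) := hx.2.trans (min_le_right _ _)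
    have h1 : β*(x - c) ≤ β*(ε0/(2*(β+1))) := by
      apply mul_le_mul_of_nonneg_left _ hβ0
      linarith
    have h2 : β*(ε0/(2*(β+1))) ≤ ε0/2 := by
      rw [mul_div_assoc'] at *
      rw [div_le_div_iff₀ (by positivity) (by norm_num)]
      nlinarith
    have h3 : A + β*(x-μ0) = (A + β*(c-μ0)) + β*(x-c) := by ring
    simp only [hε0def] at *
    linarith
  set q := (1 - ε0/2) ^ r with hqdef
  have hq1 : q < 1 := Real.rpow_lt_one (by linarith) (by linarith) hr0
  have hcontl : Continuous (fun x : ℝ => A + β*(x - μ0)) := by continuity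
  have hψc : Continuous (fun x : ℝ => min 1 ((max 0 (A + β*(x - μ0))) ^ r)) :=
    psi_cont hr0 _ hcontl
  have hTint2 : IntervalIntegrable
      (fun x : ℝ => (1/c - β) * ((μ0 - x) * (r * (x/c) ^ (r-1)))) volume 0 c :=
    (calcW_integrable hr0 hr1 hc0).const_mul _
  have hTint1 : IntervalIntegrable (fun x : ℝ => (x/c) ^ r) volume 0 c :=
    (rpow_cont hr0 _ (continuous_id.div_const c)).intervalIntegrable _ _
  have hTint : IntervalIntegrable
      (fun x : ℝ => (x/c) ^ r + (1/c - β) * ((μ0 - x) * (r * (x/c) ^ (r-1)))) volume 0 c :=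
    hTint1.add hTint2
  have hI1 : ∫ x in (0:ℝ)..c, min 1 ((max 0 (A + β*(x - μ0))) ^ r)
      ≤ ∫ x in (0:ℝ)..c, ((x/c) ^ r + (1/c - β) * ((μ0 - x) * (r * (x/c) ^ (r-1)))) := by
    refine intervalIntegral.integral_mono_ae_restrict hc0.le (hψc.intervalIntegrable _ _) hTint ?_
    have h00 : ∀ᵐ x ∂(volume.restrict (Icc (0:ℝ) c)), x ≠ (0:ℝ) := by
      refine ae_iff.mpr ?_
      have hset : {x : ℝ | ¬ x ≠ 0} = {(0:ℝ)} := by ext y; simp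
      rw [hset]
      exact le_antisymm ((Measure.restrict_le_self) _ |>.trans (by simp)) zero_le
    filter_upwards [ae_restrict_mem measurableSet_Icc, h00] with x hx hxne
    have hx0 : 0 < x := lt_of_le_of_ne hx.1 (Ne.symm hxne)
    have hv : 0 < x/c := div_pos hx0 hc0
    have hu : 0 ≤ A + β*(x - μ0) := hlnn x hx0.le
    have step1 : min 1 ((max 0 (A + β*(x - μ0))) ^ r) ≤ (A + β*(x - μ0)) ^ r := by
      rw [max_eq_right hu]; exact min_le_right _ _
    have step2 := tangent (u := A + β*(x-μ0)) (v := x/c) hr0 hr1 hu hv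
    have step3 : A + β*(x-μ0) - x/c = (1/c - β)*(μ0 - x) := by
      rw [hAc]; field_simp; ring
    calc min 1 ((max 0 (A + β*(x - μ0))) ^ r) ≤ (A + β*(x - μ0)) ^ r := step1
      _ ≤ (x/c)^r + r * (x/c)^(r-1) * (A + β*(x-μ0) - x/c) := step2
      _ = (x/c) ^ r + (1/c - β) * ((μ0 - x) * (r * (x/c) ^ (r-1))) := by rw [step3]; ring
  have hI1val : ∫ x in (0:ℝ)..c, ((x/c) ^ r + (1/c - β) * ((μ0 - x) * (r * (x/c) ^ (r-1))))
      = c/(r+1) := by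
    rw [intervalIntegral.integral_add hTint1 hTint2, intervalIntegral.integral_const_mul,
      calcA hr0 hc0, calcW hr0 hr1 hc0]
    have hz : c * μ0 - r * (c*c) / (r+1) = 0 := by
      rw [hμ]; field_simp; ring
    rw [hz, mul_zero, add_zero]
  have hI2 : ∫ x in c..e, min 1 ((max 0 (A + β*(x - μ0))) ^ r) ≤ q * (e - c) := by
    have h := intervalIntegral.integral_mono_on hce.le (hψc.intervalIntegrable _ _)
      (_root_.intervalIntegrable_const (μ := volume) (c := q)) (fun x hx => ?_)
    · rw [intervalIntegral.integral_const, smul_eq_mul] at h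
      linarith [h]
    · have hu : 0 ≤ A + β*(x - μ0) := hlnn x (le_trans hc0.le hx.1)
      calc min 1 ((max 0 (A + β*(x - μ0))) ^ r) ≤ (max 0 (A + β*(x - μ0))) ^ r :=
            min_le_right _ _
        _ = (A + β*(x - μ0)) ^ r := by rw [max_eq_right hu]
        _ ≤ q := Real.rpow_le_rpow hu (hbound x hx) hr0.le
  have hI3 : ∫ x in e..(1:ℝ), min 1 ((max 0 (A + β*(x - μ0))) ^ r) ≤ 1 - e := by
    have h := intervalIntegral.integral_mono_on he1 (hψc.intervalIntegrable _ _)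
      (_root_.intervalIntegrable_const (μ := volume) (c := (1:ℝ))) (fun x _ => min_le_left _ _)
    rw [intervalIntegral.integral_const, smul_eq_mul, mul_one] at h
    linarith [h]
  have hsplit : ∫ x in (0:ℝ)..1, min 1 ((max 0 (A + β*(x - μ0))) ^ r)
      = (∫ x in (0:ℝ)..c, min 1 ((max 0 (A + β*(x - μ0))) ^ r))
        + (∫ x in c..e, min 1 ((max 0 (A + β*(x - μ0))) ^ r))
        + (∫ x in e..(1:ℝ), min 1 ((max 0 (A + β*(x - μ0))) ^ r)) := by
    rw [intervalIntegral.integral_add_adjacent_intervals (hψc.intervalIntegrable _ _)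
      (hψc.intervalIntegrable _ _),
      intervalIntegral.integral_add_adjacent_intervals (hψc.intervalIntegrable _ _)
      (hψc.intervalIntegrable _ _)]
  have hfin : c/(r+1) + 1 - c = 1 - μ0 := by
    rw [hμ]; field_simp; ring
  have hgap : q * (e - c) < e - c := by nlinarith
  calc ∫ x in (0:ℝ)..1, min 1 ((max 0 (A + β*(x - μ0))) ^ r)
      = _ + _ + _ := hsplit
    _ ≤ c/(r+1) + (q*(e-c)) + (1-e) := by
        have := hI1.trans (le_of_eq hI1val)
        gcongr
    _ < c/(r+1) + (e-c) + (1-e) := by linarith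
    _ = 1 - μ0 := by linarith [hfin]

end Calc

section Endgame

variable {F : Measure ℝ}

lemma cdf_eq [IsProbabilityMeasure F] (hs : F (Set.Icc (0:ℝ) 1)ᶜ = 0) (ψs : ℝ → ℝ)
    (hcont : Continuous ψs) (hψ0 : ψs 0 = 0)
    (hsel : ∀ u v : ℝ, 0 ≤ u → u < v → v ≤ 1 → ∃ t, t ∈ Ioo u v ∧ (F (Ico 0 t)).toReal = ψs t)
    {x : ℝ} (hx0 : 0 ≤ x) (hx1 : x < 1) : (F (Iic x)).toReal = ψs x := by
  have hIic_le : ∀ t : ℝ, x < t → (F (Iic x)).toReal ≤ (F (Ico 0 t)).toReal := by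
    intro t hxt
    refine ENNReal.toReal_mono (measure_ne_top _ _) ?_
    calc F (Iic x) ≤ F (Ico 0 t ∪ (Icc 0 1)ᶜ) := measure_mono (fun y hy => by
          rcases le_or_gt 0 y with h0 | h0
          · rcases le_or_gt y 1 with h1 | h1
            · exact Or.inl ⟨h0, lt_of_le_of_lt (mem_Iic.mp hy) hxt⟩
            · exact Or.inr (by simp only [mem_compl_iff, mem_Icc]; intro h; linarith)
          · exact Or.inr (by simp only [mem_compl_iff, mem_Icc]; intro h; linarith))
      _ ≤ F (Ico 0 t) + F ((Icc 0 1)ᶜ) := measure_union_le _ _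
      _ = F (Ico 0 t) := by rw [hs, add_zero]
  have hle_Iic : ∀ t : ℝ, t ≤ x → (F (Ico 0 t)).toReal ≤ (F (Iic x)).toReal := by
    intro t ht
    exact ENNReal.toReal_mono (measure_ne_top _ _)
      (measure_mono (fun y hy => le_of_lt (lt_of_lt_of_le hy.2 ht)))
  refine le_antisymm ?_ ?_
  · refine le_of_forall_pos_le_add (fun ε hε => ?_)
    obtain ⟨δ, hδ0, hδ⟩ := Metric.continuous_iff.mp hcont x ε hε
    obtain ⟨t, ht, hCt⟩ := hsel x (min 1 (x + δ)) hx0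
      (lt_min hx1 (by linarith)) (min_le_left _ _)
    have hdist : dist t x < δ := by
      rw [Real.dist_eq, abs_of_pos (by linarith [ht.1])]
      have := ht.2.trans_le (min_le_right _ _)
      linarith
    have hd := hδ t hdist
    rw [Real.dist_eq, abs_lt] at hd
    calc (F (Iic x)).toReal ≤ (F (Ico 0 t)).toReal := hIic_le t ht.1
      _ = ψs t := hCt
      _ ≤ ψs x + ε := by linarith [hd.2]
  · rcases eq_or_lt_of_le hx0 with rfl | hx0'
    · rw [hψ0]; exact ENNReal.toReal_nonneg
    · refine le_of_forall_pos_le_add (fun ε hε => ?_)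
      obtain ⟨δ, hδ0, hδ⟩ := Metric.continuous_iff.mp hcont x ε hε
      obtain ⟨t, ht, hCt⟩ := hsel (max 0 (x - δ)) x (le_max_left _ _)
        (max_lt hx0' (by linarith)) hx1.le
      have hdist : dist t x < δ := by
        rw [Real.dist_eq, abs_of_neg (by linarith [ht.2])]
        have := lt_of_le_of_lt (le_max_right 0 (x - δ)) ht.1
        linarith
      have hd := hδ t hdist
      rw [Real.dist_eq, abs_lt] at hd
      calc ψs x ≤ ψs t + ε := by linarith [hd.1]
        _ = (F (Ico 0 t)).toReal + ε := by rw [hCt]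
        _ ≤ (F (Iic x)).toReal + ε := by linarith [hle_Iic t ht.2.le]

end Endgame

end Stmt12Aux

open Set Stmt12Aux

set_option maxHeartbeats 2000000 in
/-- For `n ≥ 2` and `0 < μ < 1/n`, the atomless measure `F*` on `[0,1]` with
cdf `(x/(nμ))^{1/(n-1)}` on `[0,nμ]` is the unique symmetric equilibrium of the frictionless
game. -/
theorem stmt_12 (n : ℕ) (hn : 2 ≤ n) (μ : ℝ) (hμ : 0 < μ) (hμn : μ < 1 / (n : ℝ))
    (Fstar : Measure ℝ) [IsProbabilityMeasure Fstar] (hsupp : Fstar (Set.Icc (0:ℝ) 1)ᶜ = 0)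
    (hatomless : ∀ x : ℝ, Fstar {x} = 0)
    (hcdf : ∀ x : ℝ, 0 ≤ x → x ≤ (n : ℝ) * μ →
      (Fstar (Set.Iic x)).toReal = (x / ((n : ℝ) * μ)) ^ ((1 : ℝ) / ((n : ℝ) - 1)))
    (hcdf2 : ∀ x : ℝ, (n : ℝ) * μ ≤ x → (Fstar (Set.Iic x)).toReal = 1) :
    (∀ G : Measure ℝ, MemM μ G → winProb n G Fstar ≤ 1 / (n : ℝ)) ∧
    (∀ F : Measure ℝ, MemM μ F →
      (∀ G : Measure ℝ, MemM μ G → winProb n G F ≤ 1 / (n : ℝ)) → F = Fstar) := by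
  have hn1 : 1 ≤ n := by omega
  have hnposR : (0:ℝ) < n := by exact_mod_cast (by omega : 0 < n)
  have hnμ0 : 0 < (n:ℝ)*μ := by positivity
  constructor
  · -- Part 1 : F* is an equilibrium
    intro G hG
    haveI := hG.1
    have hGs := hG.2.1
    have hGmean := hG.2.2
    rw [winProb_eq]
    have hpoint : ∀ x ∈ Icc (0:ℝ) 1, wfun n Fstar x ≤ x/((n:ℝ)*μ) := by
      intro x hx
      have h1 : wfun n Fstar x ≤ ((Fstar (Iic x)).toReal) ^ (n-1) := by
        refine (wfun_le_pow n hn1 Fstar x).trans ?_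
        exact pow_le_pow_left₀ (by positivity) (pc_le_D x) _
      rcases le_or_gt x ((n:ℝ)*μ) with hxc | hxc
      · rw [hcdf x hx.1 hxc] at h1
        have hb : 0 ≤ x/((n:ℝ)*μ) := div_nonneg hx.1 hnμ0.le
        have h2 : ((x / ((n : ℝ) * μ)) ^ ((1 : ℝ) / ((n : ℝ) - 1))) ^ (n-1)
            = x/((n:ℝ)*μ) := by
          rw [← Real.rpow_natCast ((x / ((n : ℝ) * μ)) ^ ((1 : ℝ) / ((n : ℝ) - 1))) (n-1),
            ← Real.rpow_mul hb]
          rw [show ((n-1 : ℕ):ℝ) = (n:ℝ) - 1 by rw [Nat.cast_sub (by omega)]; norm_num]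
          have hne : (n:ℝ) - 1 ≠ 0 := by
            have : (2:ℝ) ≤ (n:ℝ) := by exact_mod_cast hn
            nlinarith
          rw [one_div, inv_mul_cancel₀ hne, Real.rpow_one]
        rw [h2] at h1
        exact h1
      · rw [hcdf2 x hxc.le, one_pow] at h1
        refine h1.trans ?_
        rw [le_div_iff₀ hnμ0]
        linarith
    have hint1 : Integrable (wfun n Fstar) G := integrable_wfun hsupp hn1 G
    have hintid : Integrable (fun x : ℝ => x) G := integrable_id_of_mean (ne_of_gt hμ) hGmean
    have hint2 : Integrable (fun x : ℝ => x/((n:ℝ)*μ)) G := hintid.div_const _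
    have hae : ∀ᵐ x ∂G, x ∈ Icc (0:ℝ) 1 := ae_iff.mpr hGs
    calc ∫ x, wfun n Fstar x ∂G ≤ ∫ x, x/((n:ℝ)*μ) ∂G := by
          refine integral_mono_ae hint1 hint2 ?_
          filter_upwards [hae] with x hx using hpoint x hx
      _ = μ/((n:ℝ)*μ) := by rw [integral_div, hGmean]
      _ = 1/(n:ℝ) := by
          rw [div_eq_div_iff (ne_of_gt hnμ0) (ne_of_gt hnposR)]
          ring
  · -- Part 2 : uniqueness
    intro F hF heq
    obtain ⟨hFp, hFs, hFmean⟩ := hF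
    haveI := hFp
    set k := n - 1 with hkdef
    have hk1 : 1 ≤ k := by omega
    have hkposR : (0:ℝ) < ((k:ℕ):ℝ) := by exact_mod_cast (by omega : 0 < k)
    have hkcast : ((k:ℕ):ℝ) = (n:ℝ) - 1 := by
      rw [hkdef, Nat.cast_sub (by omega), Nat.cast_one]
    have hn_eq : (n:ℝ) = ((k:ℕ):ℝ) + 1 := by rw [hkcast]; ring
    set r := 1/((k:ℕ):ℝ) with hrdef
    have hr0 : 0 < r := by rw [hrdef]; positivity
    have hr1 : r ≤ 1 := by
      rw [hrdef, div_le_one hkposR]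
      exact_mod_cast hk1
    set c := (n:ℝ)*μ with hcdef
    have hc0 : 0 < c := by rw [hcdef]; positivity
    have hc1 : c < 1 := by
      have h := mul_lt_mul_of_pos_left hμn hnposR
      rw [mul_one_div, div_self (ne_of_gt hnposR)] at h
      rw [hcdef]
      linarith
    have hA : 1/(n:ℝ) = r/(r+1) := by
      rw [hrdef, hn_eq]
      field_simp
      ring
    have hμr : μ = c*r/(r+1) := by
      rw [hcdef, hrdef, hn_eq]
      field_simp
      ring
    have hkey : ∀ θ a b : ℝ, 0 ≤ θ → θ ≤ 1 → a ∈ Icc (0:ℝ) 1 → b ∈ Icc (0:ℝ) 1 →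
        θ*a + (1-θ)*b = μ → θ * wfun n F a + (1-θ) * wfun n F b ≤ 1/(n:ℝ) := by
      intro θ a b h0 h1 ha hb hm
      have hG := tp_memM h0 h1 ha hb hm
      have hh := heq _ hG
      rw [winProb_eq, integral_tp _ a b h0 h1] at hh
      exact hh
    have hμ1 : μ < 1 := by
      have h1 : 1/(n:ℝ) ≤ 1 := by
        rw [div_le_one hnposR]; exact_mod_cast (by omega : 1 ≤ n)
      linarith
    set S := (fun b => (wfun n F b - 1/(n:ℝ))/(b - μ)) '' (Ioc μ 1) with hSdef
    have h1S : (wfun n F 1 - 1/(n:ℝ))/(1 - μ) ∈ S := ⟨1, ⟨hμ1, le_refl 1⟩, rfl⟩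
    have hSne : S.Nonempty := ⟨_, h1S⟩
    have hslope : ∀ a ∈ Icc (0:ℝ) 1, a < μ → ∀ b ∈ Ioc μ (1:ℝ),
        (wfun n F b - 1/(n:ℝ))/(b - μ) ≤ (1/(n:ℝ) - wfun n F a)/(μ - a) := by
      intro a ha haμ b hb
      have hab : a < b := lt_trans haμ hb.1
      have hba : 0 < b - a := by linarith
      set θ := (b - μ)/(b - a) with hθ
      have h0 : 0 ≤ θ := div_nonneg (by linarith [hb.1]) hba.le
      have h1 : θ ≤ 1 := by rw [hθ, div_le_one hba]; linarith
      have hm : θ*a + (1-θ)*b = μ := by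
        rw [hθ]
        field_simp
        ring
      have hcon := hkey θ a b h0 h1 ha ⟨by linarith [ha.1], hb.2⟩ hm
      rw [div_le_div_iff₀ (by linarith [hb.1] : (0:ℝ) < b - μ) (by linarith : (0:ℝ) < μ - a)]
      have e1 : θ*(b-a) = b-μ := by rw [hθ]; field_simp
      have e2 : (1-θ)*(b-a) = μ-a := by rw [hθ]; field_simp; ring
      have h3 := mul_le_mul_of_nonneg_right hcon hba.le
      have p1 : θ*(b-a)*(wfun n F a) = (b-μ)*(wfun n F a) := by rw [e1]
      have p2 : (1-θ)*(b-a)*(wfun n F b) = (μ-a)*(wfun n F b) := by rw [e2]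
      have e3 : θ*(b-a) + (1-θ)*(b-a) = b - a := by ring
      nlinarith [h3, p1, p2, e1, e2]
    have hbddS : BddAbove S := by
      refine ⟨(1/(n:ℝ) - wfun n F 0)/(μ - 0), ?_⟩
      rintro s ⟨b, hb, rfl⟩
      exact hslope 0 ⟨le_refl 0, zero_le_one⟩ hμ b hb
    set β := sSup S with hβdef
    have hβub : ∀ b ∈ Ioc μ (1:ℝ), wfun n F b ≤ 1/(n:ℝ) + β*(b - μ) := by
      intro b hb
      have h := le_csSup hbddS ⟨b, hb, rfl⟩
      rw [div_le_iff₀ (by linarith [hb.1] : (0:ℝ) < b - μ)] at h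
      linarith
    have hβge : ∀ a ∈ Icc (0:ℝ) 1, a < μ → wfun n F a ≤ 1/(n:ℝ) + β*(a - μ) := by
      intro a ha haμ
      have h : β ≤ (1/(n:ℝ) - wfun n F a)/(μ - a) := by
        refine csSup_le hSne ?_
        rintro s ⟨b, hb, rfl⟩
        exact hslope a ha haμ b hb
      rw [le_div_iff₀ (by linarith : (0:ℝ) < μ - a)] at h
      have e : β*(a-μ) = -(β*(μ-a)) := by ring
      linarith [e, h]
    have hβ0 : 0 ≤ β := by
      have h2 := le_csSup hbddS h1S
      have h3 : 1/(n:ℝ) ≤ wfun n F 1 := wfun_one_ge hFs hn1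
      have h4 : (0:ℝ) ≤ (wfun n F 1 - 1/(n:ℝ))/(1-μ) := div_nonneg (by linarith) (by linarith)
      linarith
    have hβc : β ≤ 1/c := by
      have h : β ≤ (1/(n:ℝ) - wfun n F 0)/(μ - 0) := by
        refine csSup_le hSne ?_
        rintro s ⟨b, hb, rfl⟩
        exact hslope 0 ⟨le_refl _, zero_le_one⟩ hμ b hb
      have hw0 := wfun_nonneg n F 0
      have h5 : (1/(n:ℝ) - wfun n F 0)/(μ - 0) ≤ (1/(n:ℝ))/μ := by
        rw [sub_zero]
        exact (div_le_div_iff_of_pos_right hμ).mpr (by linarith)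
      have h6 : (1/(n:ℝ))/μ = 1/c := by rw [hcdef, div_div]
      linarith
    have hmid : wfun n F μ ≤ 1/(n:ℝ) := by
      have h := hkey 1 μ μ zero_le_one le_rfl ⟨hμ.le, hμ1.le⟩ ⟨hμ.le, hμ1.le⟩ (by ring)
      linarith
    have hl : ∀ x ∈ Icc (0:ℝ) 1, wfun n F x ≤ 1/(n:ℝ) + β*(x - μ) := by
      intro x hx
      rcases lt_trichotomy x μ with h | h | h
      · exact hβge x hx h
      · rw [h]
        simp only [sub_self, mul_zero, add_zero]
        exact hmid
      · exact hβub x ⟨h, hx.2⟩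
    have hrk : ((k:ℕ):ℝ)*r = 1 := by
      rw [hrdef]
      field_simp
    have hCle : ∀ t : ℝ, 0 ≤ t → t ≤ 1 →
        (F (Ico 0 t)).toReal ≤ min 1 ((max 0 (1/(n:ℝ) + β*(t - μ))) ^ r) := by
      intro t ht0 ht1
      have hC0 : (0:ℝ) ≤ (F (Ico 0 t)).toReal := ENNReal.toReal_nonneg
      refine le_min (toReal_le_one F _) ?_
      have h1 : ((F (Ico 0 t)).toReal)^k ≤ max 0 (1/(n:ℝ) + β*(t-μ)) := by
        refine le_trans (le_trans ?_ (hl t ⟨ht0, ht1⟩)) (le_max_right _ _)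
        rw [hkdef]
        exact pow_le_wfun n hn1 F t
      have h2 : (F (Ico 0 t)).toReal = (((F (Ico 0 t)).toReal)^k) ^ r := by
        rw [← Real.rpow_natCast ((F (Ico 0 t)).toReal) k, ← Real.rpow_mul hC0, hrk,
          Real.rpow_one]
      rw [h2]
      exact Real.rpow_le_rpow (by positivity) h1 hr0.le
    have hml := mean_layer hFs (ne_of_gt hμ) hFmean
    have hCI : ∀ t : ℝ, (F (Ici t)).toReal = 1 - (F (Ico 0 t)).toReal := by
      intro t
      have h1 := Iio_add_Ici (F := F) t
      have h2 : (F (Ico 0 t)).toReal = (F (Iio t)).toReal := by rw [meas_Ico_eq_Iio hFs]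
      linarith
    haveI hfin01 : IsFiniteMeasure (volume.restrict (Ioc (0:ℝ) 1)) := by
      constructor
      rw [Measure.restrict_apply_univ]
      simp [Real.volume_Ioc]
    have hCint : Integrable (fun t => (F (Ico 0 t)).toReal) (volume.restrict (Ioc (0:ℝ) 1)) :=
      integrable_of_bounded (measurable_cIco hFs) (fun _ => ENNReal.toReal_nonneg)
        (fun _ => toReal_le_one F _)
    have hIC : ∫ t in Ioc (0:ℝ) 1, (F (Ico 0 t)).toReal = 1 - μ := by
      have h1 : ∫ t in Ioc (0:ℝ) 1, (F (Ici t)).toReal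
          = ∫ t in Ioc (0:ℝ) 1, (1 - (F (Ico 0 t)).toReal) :=
        integral_congr_ae (Filter.Eventually.of_forall fun t => hCI t)
      have h2 : ∫ t in Ioc (0:ℝ) 1, (1 - (F (Ico 0 t)).toReal)
          = (∫ _ in Ioc (0:ℝ) 1, (1:ℝ)) - ∫ t in Ioc (0:ℝ) 1, (F (Ico 0 t)).toReal :=
        integral_sub (integrable_const 1) hCint
      have h3 : ∫ _ in Ioc (0:ℝ) 1, (1:ℝ) = 1 := by
        simp [Real.volume_Ioc]
      rw [h1, h2, h3] at hml
      linarith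
    set ψ : ℝ → ℝ := fun x => min 1 ((max 0 (1/(n:ℝ) + β*(x - μ))) ^ r) with hψdef
    have hψcont : Continuous ψ :=
      psi_cont hr0 _ (continuous_const.add (continuous_const.mul
        (continuous_id.sub continuous_const)))
    have hψint : Integrable ψ (volume.restrict (Ioc (0:ℝ) 1)) :=
      integrable_of_bounded hψcont.measurable
        (fun x => le_min zero_le_one (Real.rpow_nonneg (le_max_left _ _) _))
        (fun x => min_le_left _ _)
    have hcomp : (1:ℝ) - μ ≤ ∫ t in Ioc (0:ℝ) 1, ψ t := by
      rw [← hIC]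
      refine setIntegral_mono_on hCint hψint measurableSet_Ioc ?_
      intro t ht
      exact hCle t ht.1.le ht.2
    have hio : ∫ t in Ioc (0:ℝ) 1, ψ t = ∫ x in (0:ℝ)..1, ψ x :=
      (intervalIntegral.integral_of_le zero_le_one).symm
    have hβeq : β = 1/c := by
      rcases lt_or_eq_of_le hβc with hlt | heqq
      · exfalso
        have hstrict := calc_strict (A := 1/(n:ℝ)) hr0 hr1 hc0 hc1 hβ0 hlt hμr hA
        rw [hio] at hcomp
        simp only [hψdef] at hcomp
        linarith
      · exact heqq
    have hAμc : 1/(n:ℝ) = μ/c := by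
      rw [eq_div_iff (ne_of_gt hc0)]
      simp only [hcdef]
      field_simp
    have hψstar : ψ = fun x => min 1 ((max 0 (x/c)) ^ r) := by
      funext x
      simp only [hψdef, hβeq]
      have hxx : 1/(n:ℝ) + (1/c)*(x - μ) = x/c := by
        rw [hAμc]
        field_simp
        ring
      rw [hxx]
    have hsel : ∀ u v : ℝ, 0 ≤ u → u < v → v ≤ 1 →
        ∃ t, t ∈ Ioo u v ∧ (F (Ico 0 t)).toReal = min 1 ((max 0 (t/c)) ^ r) := by
      have hzero : ∫ t in Ioc (0:ℝ) 1, (ψ t - (F (Ico 0 t)).toReal) = 0 := by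
        rw [integral_sub hψint hCint, hIC, hio, hψstar, calc_eq hr0 hr1 hc0 hc1 hμr]
        ring
      have hnn : 0 ≤ᵐ[volume.restrict (Ioc (0:ℝ) 1)]
          (fun t => ψ t - (F (Ico 0 t)).toReal) := by
        filter_upwards [ae_restrict_mem measurableSet_Ioc] with t ht
        exact sub_nonneg.mpr (hCle t ht.1.le ht.2)
      have hae0 := (integral_eq_zero_iff_of_nonneg_ae hnn (hψint.sub hCint)).mp hzero
      have hmeasf : Measurable (fun t => ψ t - (F (Ico 0 t)).toReal) :=
        hψcont.measurable.sub (measurable_cIco hFs)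
      have hnull : volume ({t : ℝ | ψ t - (F (Ico 0 t)).toReal ≠ 0} ∩ Ioc 0 1) = 0 := by
        have h1 : (volume.restrict (Ioc (0:ℝ) 1))
            {t : ℝ | ψ t - (F (Ico 0 t)).toReal ≠ 0} = 0 := by
          have := ae_iff.mp hae0
          exact this
        have hms : MeasurableSet {t : ℝ | ψ t - (F (Ico 0 t)).toReal ≠ 0} :=
          hmeasf (measurableSet_singleton (0:ℝ)).compl
        rw [Measure.restrict_apply hms] at h1
        exact h1
      intro u v hu huv hv1
      by_contra hno
      push_neg at hno
      have hsub : Ioo u v ⊆ {t : ℝ | ψ t - (F (Ico 0 t)).toReal ≠ 0} ∩ Ioc 0 1 := by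
        intro t ht
        refine ⟨?_, ⟨lt_of_le_of_lt hu ht.1, le_trans ht.2.le hv1⟩⟩
        have h7 := hno t ht
        simp only [hψstar, mem_setOf_eq]
        exact sub_ne_zero.mpr (fun hc => h7 hc.symm)
      have hvol := measure_mono_null hsub hnull
      rw [Real.volume_Ioo, ENNReal.ofReal_eq_zero] at hvol
      linarith
    have hψs0 : min 1 ((max 0 ((0:ℝ)/c)) ^ r) = 0 := by
      rw [zero_div, max_self, Real.zero_rpow (ne_of_gt hr0)]
      norm_num
    have hFval : ∀ x : ℝ, 0 ≤ x → x < 1 →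
        (F (Iic x)).toReal = min 1 ((max 0 (x/c)) ^ r) :=
      fun x hx0 hx1 => cdf_eq hFs _ (psi_cont hr0 _ (continuous_id.div_const c)) hψs0 hsel hx0 hx1
    have hFstarval : ∀ x : ℝ, 0 ≤ x → x < 1 →
        (Fstar (Iic x)).toReal = min 1 ((max 0 (x/c)) ^ r) := by
      intro x hx0 hx1
      rcases le_or_gt x c with hxc | hxc
      · rw [hcdf x hx0 hxc]
        have hd0 : 0 ≤ x/c := div_nonneg hx0 hc0.le
        rw [max_eq_right hd0,
          min_eq_right (Real.rpow_le_one hd0 ((div_le_one hc0).mpr hxc) hr0.le)]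
        rw [show (1:ℝ)/((n:ℝ)-1) = r by rw [hrdef, hkcast]]
      · rw [hcdf2 x hxc.le]
        rw [max_eq_right (div_nonneg hx0 hc0.le),
          min_eq_left (Real.one_le_rpow ((one_le_div hc0).mpr hxc.le) hr0.le)]
    refine Measure.ext_of_Iic F Fstar (fun x => ?_)
    rcases lt_or_ge x 0 with hx | hx
    · have h1 : F (Iic x) = 0 := measure_mono_null (fun y hy => by
        simp only [mem_compl_iff, mem_Icc]
        intro h
        linarith [mem_Iic.mp hy, h.1]) hFs
      have h2 : Fstar (Iic x) = 0 := measure_mono_null (fun y hy => by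
        simp only [mem_compl_iff, mem_Icc]
        intro h
        linarith [mem_Iic.mp hy, h.1]) hsupp
      rw [h1, h2]
    · rcases lt_or_ge x 1 with hx1 | hx1
      · have h := (hFval x hx hx1).trans (hFstarval x hx hx1).symm
        exact (ENNReal.toReal_eq_toReal_iff' (measure_ne_top _ _) (measure_ne_top _ _)).mp h
      · rw [meas_Iic_eq_one hFs hx1, meas_Iic_eq_one hsupp hx1]
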